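/- Suppose λ(x,y) satisfies the two PDEs λ(λ−1)(λ_{xx} + λ_{xy}) = (2λ−1)λ_x(λ_x + λ_y) and (λ−1)(λ_{xy} + λ_{yy}) = λ_y(λ_x + λ_y), with λ ∉ {0, 1}. Then the compatibility condition (equality of mixed third derivatives) implies (λ_x + λ_y)·[λ_x²(1 − 2λ) − λ λ_x λ_y + λ_{xx} λ(λ − 1)] = 0. -/

import Mathlib

noncomputable def pdx (f : ℂ × ℂ → ℂ) (p : ℂ × ℂ) : ℂ := fderiv ℂ f p (1, 0)

noncomputable def pdy (f : ℂ × ℂ → ℂ) (p : ℂ × ℂ) : ℂ := fderiv ℂ f p (0, 1)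

namespace CompatAux

lemma pd_analytic {f : ℂ × ℂ → ℂ} {Ω : Set (ℂ × ℂ)} (hf : AnalyticOnNhd ℂ f Ω)
    (w : ℂ × ℂ) : AnalyticOnNhd ℂ (fun q => fderiv ℂ f q w) Ω := fun x hx =>
  ((ContinuousLinearMap.apply ℂ ℂ w).analyticAt _).comp (hf x hx).fderiv

lemma pdx_analytic {f : ℂ × ℂ → ℂ} {Ω : Set (ℂ × ℂ)} (hf : AnalyticOnNhd ℂ f Ω) :
    AnalyticOnNhd ℂ (pdx f) Ω := pd_analytic hf _

lemma pdy_analytic {f : ℂ × ℂ → ℂ} {Ω : Set (ℂ × ℂ)} (hf : AnalyticOnNhd ℂ f Ω) :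
    AnalyticOnNhd ℂ (pdy f) Ω := pd_analytic hf _

lemma pd_swap {f : ℂ × ℂ → ℂ} {Ω : Set (ℂ × ℂ)} (hΩ : IsOpen Ω)
    (hf : AnalyticOnNhd ℂ f Ω) {p : ℂ × ℂ} (hp : p ∈ Ω) :
    pdx (pdy f) p = pdy (pdx f) p := by
  have hdd : DifferentiableAt ℂ (fderiv ℂ f) p := (hf p hp).fderiv.differentiableAt
  have hev : ∀ᶠ q in nhds p, HasFDerivAt f (fderiv ℂ f q) q := by
    filter_upwards [hΩ.mem_nhds hp] with q hq using ((hf q hq).differentiableAt).hasFDerivAt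
  have hsymm := second_derivative_symmetric_of_eventually hev hdd.hasFDerivAt
      ((1 : ℂ), (0 : ℂ)) ((0 : ℂ), (1 : ℂ))
  have h1 : pdx (pdy f) p = fderiv ℂ (fderiv ℂ f) p (1, 0) (0, 1) := by
    have hc : HasFDerivAt (pdy f)
        ((ContinuousLinearMap.apply ℂ ℂ ((0 : ℂ), (1 : ℂ))).comp
          (fderiv ℂ (fderiv ℂ f) p)) p :=
      (ContinuousLinearMap.apply ℂ ℂ ((0 : ℂ), (1 : ℂ))).hasFDerivAt.comp p hdd.hasFDerivAt
    have h := hc.fderiv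
    unfold pdx
    rw [h]
    rfl
  have h2 : pdy (pdx f) p = fderiv ℂ (fderiv ℂ f) p (0, 1) (1, 0) := by
    have hc : HasFDerivAt (pdx f)
        ((ContinuousLinearMap.apply ℂ ℂ ((1 : ℂ), (0 : ℂ))).comp
          (fderiv ℂ (fderiv ℂ f) p)) p :=
      (ContinuousLinearMap.apply ℂ ℂ ((1 : ℂ), (0 : ℂ))).hasFDerivAt.comp p hdd.hasFDerivAt
    have h := hc.fderiv
    unfold pdy
    rw [h]
    rfl
  rw [h1, h2, hsymm]

end CompatAux

open CompatAux in
/-- If `λ ∉ {0,1}` satisfies `λ(λ−1)(λ_{xx} + λ_{xy}) = (2λ−1)λ_x(λ_x + λ_y)`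
and `(λ−1)(λ_{xy} + λ_{yy}) = λ_y(λ_x + λ_y)`, then the compatibility
condition of the two PDEs yields
`(λ_x + λ_y)·[λ_x²(1 − 2λ) − λλ_xλ_y + λ_{xx}λ(λ−1)] = 0`. -/
theorem compatibility_of_flatness_pdes
    (Ω : Set (ℂ × ℂ)) (hΩ : IsOpen Ω)
    (lam : ℂ × ℂ → ℂ) (hlam : AnalyticOn ℂ lam Ω)
    (h0 : ∀ p ∈ Ω, lam p ≠ 0) (h1 : ∀ p ∈ Ω, lam p ≠ 1)
    (hpde1 : ∀ p ∈ Ω, lam p * (lam p - 1) * (pdx (pdx lam) p + pdy (pdx lam) p) =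
      (2 * lam p - 1) * pdx lam p * (pdx lam p + pdy lam p))
    (hpde2 : ∀ p ∈ Ω, (lam p - 1) * (pdy (pdx lam) p + pdy (pdy lam) p) =
      pdy lam p * (pdx lam p + pdy lam p)) :
    ∀ p ∈ Ω, (pdx lam p + pdy lam p) *
      ((pdx lam p)^2 * (1 - 2 * lam p) - lam p * pdx lam p * pdy lam p
        + pdx (pdx lam) p * lam p * (lam p - 1)) = 0 := by
  intro p hp
  have hA : AnalyticOnNhd ℂ lam Ω := hΩ.analyticOn_iff_analyticOnNhd.mp hlam
  have Ax : AnalyticOnNhd ℂ (pdx lam) Ω := pdx_analytic hA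
  have Ay : AnalyticOnNhd ℂ (pdy lam) Ω := pdy_analytic hA
  have Axx : AnalyticOnNhd ℂ (pdx (pdx lam)) Ω := pdx_analytic Ax
  have Ayx : AnalyticOnNhd ℂ (pdy (pdx lam)) Ω := pdy_analytic Ax
  have Ayy : AnalyticOnNhd ℂ (pdy (pdy lam)) Ω := pdy_analytic Ay
  -- differentiability at p
  have hdlam : HasFDerivAt lam (fderiv ℂ lam p) p := (hA p hp).differentiableAt.hasFDerivAt
  have hdx : HasFDerivAt (pdx lam) (fderiv ℂ (pdx lam) p) p :=
    (Ax p hp).differentiableAt.hasFDerivAt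
  have hdy : HasFDerivAt (pdy lam) (fderiv ℂ (pdy lam) p) p :=
    (Ay p hp).differentiableAt.hasFDerivAt
  have hdxx : HasFDerivAt (pdx (pdx lam)) (fderiv ℂ (pdx (pdx lam)) p) p :=
    (Axx p hp).differentiableAt.hasFDerivAt
  have hdyx : HasFDerivAt (pdy (pdx lam)) (fderiv ℂ (pdy (pdx lam)) p) p :=
    (Ayx p hp).differentiableAt.hasFDerivAt
  have hdyy : HasFDerivAt (pdy (pdy lam)) (fderiv ℂ (pdy (pdy lam)) p) p :=
    (Ayy p hp).differentiableAt.hasFDerivAt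
  -- derivative of PDE1 in the y-direction
  have hev1 : (fun q => lam q * (lam q - 1) * (pdx (pdx lam) q + pdy (pdx lam) q))
      =ᶠ[nhds p] (fun q => (2 * lam q - 1) * pdx lam q * (pdx lam q + pdy lam q)) := by
    filter_upwards [hΩ.mem_nhds hp] with q hq using hpde1 q hq
  have HL1 := (hdlam.mul (hdlam.sub_const 1)).mul (hdxx.add hdyx)
  have HR1 := ((hdlam.const_mul 2).sub_const 1).mul hdx |>.mul (hdx.add hdy)
  have E1 : lam p * (lam p - 1) * (pdy (pdx (pdx lam)) p + pdy (pdy (pdx lam)) p)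
        + (pdx (pdx lam) p + pdy (pdx lam) p)
          * (lam p * pdy lam p + (lam p - 1) * pdy lam p)
      = (2 * lam p - 1) * pdx lam p * (pdy (pdx lam) p + pdy (pdy lam) p)
        + (pdx lam p + pdy lam p)
          * ((2 * lam p - 1) * pdy (pdx lam) p + pdx lam p * (2 * pdy lam p)) := by
    have e := DFunLike.congr_fun (HL1.unique (HR1.congr_of_eventuallyEq hev1))
      ((0 : ℂ), (1 : ℂ))
    simp only [ContinuousLinearMap.add_apply, ContinuousLinearMap.smul_apply,
      smul_eq_mul, Pi.mul_apply, Pi.add_apply, pdx, pdy] at e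
    simp only [pdx, pdy]
    linear_combination e
  -- derivative of PDE2 in the x-direction
  have hev2 : (fun q => (lam q - 1) * (pdy (pdx lam) q + pdy (pdy lam) q))
      =ᶠ[nhds p] (fun q => pdy lam q * (pdx lam q + pdy lam q)) := by
    filter_upwards [hΩ.mem_nhds hp] with q hq using hpde2 q hq
  have HL2 := (hdlam.sub_const 1).mul (hdyx.add hdyy)
  have HR2 := hdy.mul (hdx.add hdy)
  have E2 : (lam p - 1) * (pdx (pdy (pdx lam)) p + pdx (pdy (pdy lam)) p)
        + (pdy (pdx lam) p + pdy (pdy lam) p) * pdx lam p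
      = pdy lam p * (pdx (pdx lam) p + pdx (pdy lam) p)
        + (pdx lam p + pdy lam p) * pdx (pdy lam) p := by
    have e := DFunLike.congr_fun (HL2.unique (HR2.congr_of_eventuallyEq hev2))
      ((1 : ℂ), (0 : ℂ))
    simp only [ContinuousLinearMap.add_apply, ContinuousLinearMap.smul_apply,
      smul_eq_mul, Pi.mul_apply, Pi.add_apply, pdx, pdy] at e
    simp only [pdx, pdy]
    linear_combination e
  -- Clairaut symmetry
  have cV : pdx (pdy lam) p = pdy (pdx lam) p := pd_swap hΩ hA hp
  have cT1 : pdx (pdy (pdx lam)) p = pdy (pdx (pdx lam)) p := pd_swap hΩ Ax hp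
  have cT2 : pdx (pdy (pdy lam)) p = pdy (pdy (pdx lam)) p := by
    rw [pd_swap hΩ Ay hp]
    have hevv : pdx (pdy lam) =ᶠ[nhds p] pdy (pdx lam) := by
      filter_upwards [hΩ.mem_nhds hp] with q hq using pd_swap hΩ hA hq
    exact DFunLike.congr_fun hevv.fderiv_eq ((0 : ℂ), (1 : ℂ))
  rw [cT1, cT2, cV] at E2
  have H1 := hpde1 p hp
  have H2 := hpde2 p hp
  have hL1 : lam p - 1 ≠ 0 := sub_ne_zero.mpr (h1 p hp)
  have key : (lam p - 1) * ((pdx lam p + pdy lam p) * (lam p - 1)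
      * (pdx lam p * pdy lam p - lam p * pdy (pdx lam) p)) = 0 := by
    linear_combination (lam p * (lam p - 1)) * E1 - (lam p ^ 2 * (lam p - 1)) * E2
      - ((3 * lam p - 1) * pdy lam p) * H1
      + ((3 * lam p - 1) * pdx lam p * lam p) * H2
  have key2 := (mul_eq_zero.mp key).resolve_left hL1
  linear_combination key2 + (pdx lam p + pdy lam p) * H1
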